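/- Let k be a field and A ∈ ASM(n). The ASM ideal is generated by its essential minors: I_A = ⟨ all minors of size r_A(i,j)+1 of Z_{[i],[j]} : (i,j) ∈ Ess(A) ⟩; equivalently, I_A = ∑_{u ∈ biGr(A)} I_u, where biGr(A) = {[i, j, r_A(i,j)]_b : (i,j) ∈ Ess(A)}. -/

import Mathlib

/-- The entry of an `n × n` integer matrix in 1-based coordinates;
`0` outside the grid `[1,n] × [1,n]`. -/
def entry1 {n : ℕ} (A : Matrix (Fin n) (Fin n) ℤ) (i j : ℕ) : ℤ :=
  if h : 1 ≤ i ∧ i ≤ n ∧ 1 ≤ j ∧ j ≤ n then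
    A ⟨i - 1, by omega⟩ ⟨j - 1, by omega⟩ else 0

/-- The corner sum `r_A(i,j) = ∑_{k ≤ i} ∑_{l ≤ j} a_{k l}` (1-based). -/
def cornerSum {n : ℕ} (A : Matrix (Fin n) (Fin n) ℤ) (i j : ℕ) : ℤ :=
  ∑ k ∈ Finset.Icc 1 i, ∑ l ∈ Finset.Icc 1 j, entry1 A k l

/-- Partial row sum `∑_{l=1}^{j} a_{i l}`. -/
def rowPartial {n : ℕ} (A : Matrix (Fin n) (Fin n) ℤ) (i j : ℕ) : ℤ :=
  ∑ l ∈ Finset.Icc 1 j, entry1 A i l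

/-- Partial column sum `∑_{k=1}^{i} a_{k j}`. -/
def colPartial {n : ℕ} (A : Matrix (Fin n) (Fin n) ℤ) (i j : ℕ) : ℤ :=
  ∑ k ∈ Finset.Icc 1 i, entry1 A k j

/-- `A` is an alternating sign matrix: every partial row and column sum is `0`
or `1`, and every full row and column sums to `1`. -/
def IsASM {n : ℕ} (A : Matrix (Fin n) (Fin n) ℤ) : Prop :=
  (∀ i j : ℕ, rowPartial A i j = 0 ∨ rowPartial A i j = 1) ∧
  (∀ i j : ℕ, colPartial A i j = 0 ∨ colPartial A i j = 1) ∧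
  (∀ i : ℕ, 1 ≤ i → i ≤ n → rowPartial A i n = 1) ∧
  (∀ j : ℕ, 1 ≤ j → j ≤ n → colPartial A n j = 1)

/-- `A` is a partial alternating sign matrix: every partial row and column sum
is `0` or `1`. -/
def IsPartialASM {n : ℕ} (A : Matrix (Fin n) (Fin n) ℤ) : Prop :=
  (∀ i j : ℕ, rowPartial A i j = 0 ∨ rowPartial A i j = 1) ∧
  (∀ i j : ℕ, colPartial A i j = 0 ∨ colPartial A i j = 1)

/-- `(i,j)` (1-based) is in the Rothe diagram `D(A)`:
`∑_{k > i, l > j} a_{i l} a_{k j} = 1`. -/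
def InDiagram {n : ℕ} (A : Matrix (Fin n) (Fin n) ℤ) (i j : ℕ) : Prop :=
  (∑ k ∈ Finset.Icc 1 n, ∑ l ∈ Finset.Icc 1 n,
    (if i < k ∧ j < l then entry1 A i l * entry1 A k j else 0)) = 1

/-- `(i,j)` is in the essential set `Ess(A)`. -/
def InEss {n : ℕ} (A : Matrix (Fin n) (Fin n) ℤ) (i j : ℕ) : Prop :=
  InDiagram A i j ∧ ¬ InDiagram A (i + 1) j ∧ ¬ InDiagram A i (j + 1)

/-- The permutation matrix of `w` (a `1` in positions `(a, w a)`). -/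
def permMatrix {n : ℕ} (w : Equiv.Perm (Fin n)) : Matrix (Fin n) (Fin n) ℤ :=
  Matrix.of fun a b => if w a = b then 1 else 0

/-- The value `w(a)` of the permutation `w` in 1-based coordinates, extended by
the identity outside `[1,n]`. -/
def pval {n : ℕ} (w : Equiv.Perm (Fin n)) (a : ℕ) : ℕ :=
  if h : 1 ≤ a ∧ a ≤ n then ((w ⟨a - 1, by omega⟩ : Fin n) : ℕ) + 1 else a

/-- The value function (1-based) of the biGrassmannian permutation `[i,j,r]_b`. -/
def biGrFun (i j r a : ℕ) : ℕ :=
  if a ≤ r then a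
  else if a ≤ i then a + (j - r)
  else if a ≤ i + j - r then a - (i - r)
  else a

/-- The permutation matrix of the biGrassmannian permutation `[i,j,r]_b ∈ S_n`. -/
def biGrMatrix (n i j r : ℕ) : Matrix (Fin n) (Fin n) ℤ :=
  Matrix.of fun a b => if biGrFun i j r ((a : ℕ) + 1) = (b : ℕ) + 1 then 1 else 0

/-- `u ∈ S_n` is the biGrassmannian permutation `[i,j,r]_b`, i.e. its values
are given by the defining formula. -/
def IsBiGrPerm (n i j r : ℕ) (u : Equiv.Perm (Fin n)) : Prop :=
  ∀ a : ℕ, 1 ≤ a → a ≤ n → pval u a = biGrFun i j r a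

/-- `(a,b)` (1-based) is in the Rothe diagram of the permutation `w`:
`w(a) > b` and `w⁻¹(b) > a`. -/
def InPermDiagram {n : ℕ} (w : Equiv.Perm (Fin n)) (a b : ℕ) : Prop :=
  1 ≤ a ∧ a ≤ n ∧ 1 ≤ b ∧ b ≤ n ∧ b < pval w a ∧ a < pval w⁻¹ b

/-- `(a,b)` is in the essential set of the permutation `w`. -/
def InPermEss {n : ℕ} (w : Equiv.Perm (Fin n)) (a b : ℕ) : Prop :=
  InPermDiagram w a b ∧ ¬ InPermDiagram w (a + 1) b ∧ ¬ InPermDiagram w a (b + 1)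

/-- `w` has a descent at (1-based) position `d`: `w(d) > w(d+1)`. -/
def HasDescentAt {n : ℕ} (w : Equiv.Perm (Fin n)) (d : ℕ) : Prop :=
  1 ≤ d ∧ d < n ∧ pval w (d + 1) < pval w d

/-- `u` is biGrassmannian: both `u` and `u⁻¹` have a unique descent. -/
def IsBiGrassmannian {n : ℕ} (u : Equiv.Perm (Fin n)) : Prop :=
  (∃! d : ℕ, HasDescentAt u d) ∧ (∃! d : ℕ, HasDescentAt u⁻¹ d)

/-- The set of all minors of size `m` of `Z_{[i],[j]}`, where `Z = (z_{ab})`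
is the generic `n × n` matrix: determinants of `m × m` submatrices of `Z`
whose rows are chosen (strictly increasingly) among the first `i` rows and
whose columns among the first `j` columns. -/
def minorsOf (K : Type*) [CommRing K] (n i j m : ℕ) :
    Set (MvPolynomial (Fin n × Fin n) K) :=
  {p | ∃ f g : Fin m → Fin n, StrictMono f ∧ StrictMono g ∧
        (∀ a : Fin m, (f a : ℕ) < i) ∧ (∀ a : Fin m, (g a : ℕ) < j) ∧
        p = (Matrix.of fun a b : Fin m => MvPolynomial.X (f a, g b)).det}

/-- The ASM ideal `I_A`: the ideal of `K[z_{11}, ..., z_{nn}]` generated by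
all minors of size `r_A(i,j) + 1` of `Z_{[i],[j]}`, for all `1 ≤ i,j ≤ n`. -/
noncomputable def asmIdeal (K : Type*) [CommRing K] {n : ℕ}
    (A : Matrix (Fin n) (Fin n) ℤ) : Ideal (MvPolynomial (Fin n × Fin n) K) :=
  Ideal.span {p | ∃ i j : ℕ, 1 ≤ i ∧ i ≤ n ∧ 1 ≤ j ∧ j ≤ n ∧
    p ∈ minorsOf K n i j ((cornerSum A i j).toNat + 1)}

section Helpers

open Finset

variable {n : ℕ} (A : Matrix (Fin n) (Fin n) ℤ)

lemma Icc_one_eq_Ioc (m : ℕ) : Finset.Icc 1 m = Finset.Ioc 0 m := by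
  ext x; simp [Finset.mem_Icc, Finset.mem_Ioc]; omega

lemma sum_split {M : Type*} [AddCommMonoid M] (f : ℕ → M) {j m : ℕ} (h : j ≤ m) :
    ∑ l ∈ Finset.Icc 1 m, f l
      = (∑ l ∈ Finset.Icc 1 j, f l) + ∑ l ∈ Finset.Icc (j+1) m, f l := by
  rw [Icc_one_eq_Ioc, Icc_one_eq_Ioc, Finset.Icc_add_one_left_eq_Ioc,
    Finset.sum_Ioc_consecutive _ (Nat.zero_le j) h]

lemma cornerSum_rows (i j : ℕ) :
    cornerSum A i j = ∑ k ∈ Finset.Icc 1 i, rowPartial A k j := rfl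

lemma cornerSum_cols (i j : ℕ) :
    cornerSum A i j = ∑ l ∈ Finset.Icc 1 j, colPartial A i l := by
  unfold cornerSum colPartial; exact Finset.sum_comm

lemma entry1_eq_zero {i j : ℕ} (h : ¬(1 ≤ i ∧ i ≤ n ∧ 1 ≤ j ∧ j ≤ n)) :
    entry1 A i j = 0 := dif_neg h

lemma cornerSum_succ_row (i j : ℕ) :
    cornerSum A (i+1) j = cornerSum A i j + rowPartial A (i+1) j := by
  rw [cornerSum_rows, cornerSum_rows, Finset.sum_Icc_succ_top (by omega)]

lemma cornerSum_succ_col (i j : ℕ) :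
    cornerSum A i (j+1) = cornerSum A i j + colPartial A i (j+1) := by
  rw [cornerSum_cols, cornerSum_cols, Finset.sum_Icc_succ_top (by omega)]

lemma inDiagram_bounds {i j : ℕ} (h : InDiagram A i j) :
    1 ≤ i ∧ i < n ∧ 1 ≤ j ∧ j < n := by
  by_contra hc
  unfold InDiagram at h
  have h0 : (∑ k ∈ Finset.Icc 1 n, ∑ l ∈ Finset.Icc 1 n,
      (if i < k ∧ j < l then entry1 A i l * entry1 A k j else 0)) = 0 := by
    apply Finset.sum_eq_zero
    intro k hk
    apply Finset.sum_eq_zero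
    intro l hl
    simp only [Finset.mem_Icc] at hk hl
    split_ifs with hkl
    · by_cases h1 : 1 ≤ i ∧ i ≤ n ∧ 1 ≤ l ∧ l ≤ n
      · by_cases h2 : 1 ≤ k ∧ k ≤ n ∧ 1 ≤ j ∧ j ≤ n
        · exfalso; apply hc; omega
        · rw [entry1_eq_zero A h2, mul_zero]
      · rw [entry1_eq_zero A h1, zero_mul]
    · rfl
  rw [h0] at h
  exact one_ne_zero h.symm

lemma inDiagram_char (hA : IsASM A) {i j : ℕ}
    (hi1 : 1 ≤ i) (hin : i ≤ n) (hj1 : 1 ≤ j) (hjn : j ≤ n) :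
    InDiagram A i j ↔ (rowPartial A i j = 0 ∧ colPartial A i j = 0) := by
  obtain ⟨hr, hc, hrf, hcf⟩ := hA
  have factor_row : (∑ l ∈ Finset.Icc 1 n, if j < l then entry1 A i l else 0)
      = 1 - rowPartial A i j := by
    rw [← Finset.sum_filter]
    have hfil : (Finset.Icc 1 n).filter (fun l => j < l) = Finset.Icc (j+1) n := by
      ext x; simp [Finset.mem_Icc, Finset.mem_filter]; omega
    rw [hfil]
    have hsp := sum_split (fun l => entry1 A i l) hjn
    have : rowPartial A i n = rowPartial A i j + ∑ l ∈ Finset.Icc (j+1) n, entry1 A i l := hsp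
    rw [hrf i hi1 hin] at this
    linarith
  have factor_col : (∑ k ∈ Finset.Icc 1 n, if i < k then entry1 A k j else 0)
      = 1 - colPartial A i j := by
    rw [← Finset.sum_filter]
    have hfil : (Finset.Icc 1 n).filter (fun k => i < k) = Finset.Icc (i+1) n := by
      ext x; simp [Finset.mem_Icc, Finset.mem_filter]; omega
    rw [hfil]
    have hsp := sum_split (fun k => entry1 A k j) hin
    have : colPartial A n j = colPartial A i j + ∑ k ∈ Finset.Icc (i+1) n, entry1 A k j := hsp
    rw [hcf j hj1 hjn] at this
    linarith
  have key : (∑ k ∈ Finset.Icc 1 n, ∑ l ∈ Finset.Icc 1 n,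
      (if i < k ∧ j < l then entry1 A i l * entry1 A k j else 0))
      = (1 - rowPartial A i j) * (1 - colPartial A i j) := by
    have step1 : ∀ k ∈ Finset.Icc 1 n,
        (∑ l ∈ Finset.Icc 1 n, if i < k ∧ j < l then entry1 A i l * entry1 A k j else 0)
        = (∑ l ∈ Finset.Icc 1 n, if j < l then entry1 A i l else 0)
            * (if i < k then entry1 A k j else 0) := by
      intro k _
      rw [Finset.sum_mul]
      refine Finset.sum_congr rfl fun l _ => ?_
      rcases Classical.em (i < k) with hk | hk <;> rcases Classical.em (j < l) with hl | hl <;>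
        simp [hk, hl]
    rw [Finset.sum_congr rfl step1, ← Finset.mul_sum, factor_row, factor_col]
  unfold InDiagram
  rw [key]
  rcases hr i j with h1 | h1 <;> rcases hc i j with h2 | h2 <;>
    rw [h1, h2] <;> norm_num

lemma cornerSum_nonneg (hA : IsASM A) (i j : ℕ) : 0 ≤ cornerSum A i j := by
  rw [cornerSum_rows]
  apply Finset.sum_nonneg
  intro k _
  rcases hA.1 k j with h | h <;> omega

lemma cornerSum_le_col (hA : IsASM A) (i j : ℕ) : cornerSum A i j ≤ (j : ℤ) := by
  rw [cornerSum_cols]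
  calc ∑ l ∈ Finset.Icc 1 j, colPartial A i l ≤ ∑ l ∈ Finset.Icc 1 j, (1 : ℤ) := by
        apply Finset.sum_le_sum
        intro l _
        rcases hA.2.1 i l with h | h <;> omega
    _ = (j : ℤ) := by simp [Nat.card_Icc]

lemma cornerSum_le_row (hA : IsASM A) (i j : ℕ) : cornerSum A i j ≤ (i : ℤ) := by
  rw [cornerSum_rows]
  calc ∑ k ∈ Finset.Icc 1 i, rowPartial A k j ≤ ∑ k ∈ Finset.Icc 1 i, (1 : ℤ) := by
        apply Finset.sum_le_sum
        intro k _
        rcases hA.1 k j with h | h <;> omega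
    _ = (i : ℤ) := by simp [Nat.card_Icc]

end Helpers
section Minors

open Finset

variable {K : Type*} [CommRing K] {n : ℕ}

lemma minorsOf_mono {i i' j j' m : ℕ} (hi : i ≤ i') (hj : j ≤ j') :
    minorsOf K n i j m ⊆ minorsOf K n i' j' m := by
  rintro p ⟨f, g, hf, hg, hfi, hgj, hp⟩
  exact ⟨f, g, hf, hg, fun a => lt_of_lt_of_le (hfi a) hi,
    fun a => lt_of_lt_of_le (hgj a) hj, hp⟩

lemma minorsOf_step {i j t : ℕ} :
    minorsOf K n i j (t+1) ⊆ ↑(Ideal.span (minorsOf K n i j t)) := by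
  rintro p ⟨f, g, hf, hg, hfi, hgj, rfl⟩
  rw [Matrix.det_succ_row_zero]
  apply Ideal.sum_mem
  intro c _
  apply Ideal.mul_mem_left
  apply Ideal.subset_span
  exact ⟨f ∘ Fin.succ, g ∘ c.succAbove, hf.comp (Fin.strictMono_succ),
    hg.comp (Fin.strictMono_succAbove c), fun a => hfi _, fun a => hgj _, rfl⟩

lemma minorsOf_row {i j t : ℕ} :
    minorsOf K n (i+1) j (t+1) ⊆ ↑(Ideal.span (minorsOf K n i j t)) := by
  rintro p ⟨f, g, hf, hg, hfi, hgj, rfl⟩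
  by_cases hlast : (f (Fin.last t) : ℕ) < i
  · refine minorsOf_step ⟨f, g, hf, hg, fun a => ?_, hgj, rfl⟩
    have h1 : f a ≤ f (Fin.last t) := hf.monotone (Fin.le_last a)
    have h2 : (f a : ℕ) ≤ (f (Fin.last t) : ℕ) := h1
    omega
  · have hfl : (f (Fin.last t) : ℕ) = i := by have := hfi (Fin.last t); omega
    rw [Matrix.det_succ_row _ (Fin.last t)]
    apply Ideal.sum_mem
    intro c _
    apply Ideal.mul_mem_left
    apply Ideal.subset_span
    refine ⟨f ∘ Fin.castSucc, g ∘ c.succAbove, hf.comp Fin.strictMono_castSucc,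
      hg.comp (Fin.strictMono_succAbove c), fun a => ?_, fun a => hgj _, ?_⟩
    · show (f (Fin.castSucc a) : ℕ) < i
      have h1 : f (Fin.castSucc a) < f (Fin.last t) := hf (Fin.castSucc_lt_last a)
      have h2 : (f (Fin.castSucc a) : ℕ) < (f (Fin.last t) : ℕ) := h1
      omega
    · rw [Fin.succAbove_last]
      rfl

lemma minorsOf_col {i j t : ℕ} :
    minorsOf K n i (j+1) (t+1) ⊆ ↑(Ideal.span (minorsOf K n i j t)) := by
  rintro p ⟨f, g, hf, hg, hfi, hgj, rfl⟩
  by_cases hlast : (g (Fin.last t) : ℕ) < j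
  · refine minorsOf_step ⟨f, g, hf, hg, hfi, fun a => ?_, rfl⟩
    have h1 : g a ≤ g (Fin.last t) := hg.monotone (Fin.le_last a)
    have h2 : (g a : ℕ) ≤ (g (Fin.last t) : ℕ) := h1
    omega
  · have hgl : (g (Fin.last t) : ℕ) = j := by have := hgj (Fin.last t); omega
    rw [Matrix.det_succ_column _ (Fin.last t)]
    apply Ideal.sum_mem
    intro c _
    apply Ideal.mul_mem_left
    apply Ideal.subset_span
    refine ⟨f ∘ c.succAbove, g ∘ Fin.castSucc, hf.comp (Fin.strictMono_succAbove c),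
      hg.comp Fin.strictMono_castSucc, fun a => hfi _, fun a => ?_, ?_⟩
    · show (g (Fin.castSucc a) : ℕ) < j
      have h1 : g (Fin.castSucc a) < g (Fin.last t) := hg (Fin.castSucc_lt_last a)
      have h2 : (g (Fin.castSucc a) : ℕ) < (g (Fin.last t) : ℕ) := h1
      omega
    · rw [Fin.succAbove_last]
      rfl

end Minors
section Phase

open Finset

variable {K : Type*} [CommRing K] {n : ℕ} (A : Matrix (Fin n) (Fin n) ℤ)

lemma phaseD (hA : IsASM A) :
    ∀ d i j, InDiagram A i j → 2*n ≤ i + j + d →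
    minorsOf K n i j ((cornerSum A i j).toNat + 1) ⊆
      ↑(Ideal.span {p : MvPolynomial (Fin n × Fin n) K | ∃ i j : ℕ, InEss A i j ∧
        p ∈ minorsOf K n i j ((cornerSum A i j).toNat + 1)}) := by
  intro d
  induction d with
  | zero =>
    intro i j hD hd
    obtain ⟨h1, h2, h3, h4⟩ := inDiagram_bounds A hD
    omega
  | succ d ih =>
    intro i j hD hd
    by_cases hE : InEss A i j
    · exact fun p hp => Ideal.subset_span ⟨i, j, hE, hp⟩
    · have hor : InDiagram A (i+1) j ∨ InDiagram A i (j+1) := by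
        by_contra hc
        push_neg at hc
        exact hE ⟨hD, hc.1, hc.2⟩
      rcases hor with h | h
      · obtain ⟨hb1, hb2, hb3, hb4⟩ := inDiagram_bounds A h
        have hrp : rowPartial A (i+1) j = 0 :=
          ((inDiagram_char A hA (by omega) (by omega) (by omega) (by omega)).mp h).1
        have hcs : cornerSum A (i+1) j = cornerSum A i j := by
          rw [cornerSum_succ_row, hrp, add_zero]
        have hrec := ih (i+1) j h (by omega)
        rw [hcs] at hrec
        exact subset_trans (minorsOf_mono (Nat.le_succ i) le_rfl) hrec
      · obtain ⟨hb1, hb2, hb3, hb4⟩ := inDiagram_bounds A h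
        have hcp : colPartial A i (j+1) = 0 :=
          ((inDiagram_char A hA (by omega) (by omega) (by omega) (by omega)).mp h).2
        have hcs : cornerSum A i (j+1) = cornerSum A i j := by
          rw [cornerSum_succ_col, hcp, add_zero]
        have hrec := ih i (j+1) h (by omega)
        rw [hcs] at hrec
        exact subset_trans (minorsOf_mono le_rfl (Nat.le_succ j)) hrec

lemma phaseAll (hA : IsASM A) :
    ∀ d i j, i ≤ n → j ≤ n → i + j ≤ d →
    minorsOf K n i j ((cornerSum A i j).toNat + 1) ⊆
      ↑(Ideal.span {p : MvPolynomial (Fin n × Fin n) K | ∃ i j : ℕ, InEss A i j ∧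
        p ∈ minorsOf K n i j ((cornerSum A i j).toNat + 1)}) := by
  intro d
  induction d with
  | zero =>
    intro i j hi hj hd
    rintro p ⟨f, g, hf, hg, hfi, hgj, hp⟩
    exfalso
    have := hfi 0
    omega
  | succ d ih =>
    intro i j hi hj hd
    rcases Nat.eq_zero_or_pos i with rfl | hi1
    · rintro p ⟨f, g, hf, hg, hfi, hgj, hp⟩
      exfalso; have := hfi 0; omega
    rcases Nat.eq_zero_or_pos j with rfl | hj1
    · rintro p ⟨f, g, hf, hg, hfi, hgj, hp⟩
      exfalso; have := hgj 0; omega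
    by_cases hD : InDiagram A i j
    · exact phaseD A hA (2*n) i j hD (by omega)
    · have hone : rowPartial A i j = 1 ∨ colPartial A i j = 1 := by
        rcases hA.1 i j with h1 | h1
        · rcases hA.2.1 i j with h2 | h2
          · exact absurd ((inDiagram_char A hA hi1 hi hj1 hj).mpr ⟨h1, h2⟩) hD
          · exact Or.inr h2
        · exact Or.inl h1
      rcases hone with h1 | h1
      · obtain ⟨i', rfl⟩ : ∃ i', i = i' + 1 := ⟨i - 1, by omega⟩
        have hcs : cornerSum A (i'+1) j = cornerSum A i' j + 1 := by
          rw [cornerSum_succ_row, h1]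
        have hnn : 0 ≤ cornerSum A i' j := cornerSum_nonneg A hA i' j
        have hsz : (cornerSum A (i'+1) j).toNat + 1 = ((cornerSum A i' j).toNat + 1) + 1 := by
          omega
        rw [hsz]
        intro p hp
        have step := minorsOf_row (K := K) (n := n) (i := i') (j := j)
          (t := (cornerSum A i' j).toNat + 1) hp
        have hsub : Ideal.span (minorsOf K n i' j ((cornerSum A i' j).toNat + 1)) ≤
            Ideal.span {p : MvPolynomial (Fin n × Fin n) K | ∃ i j : ℕ, InEss A i j ∧
              p ∈ minorsOf K n i j ((cornerSum A i j).toNat + 1)} :=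
          Ideal.span_le.mpr (ih i' j (by omega) hj (by omega))
        exact hsub step
      · obtain ⟨j', rfl⟩ : ∃ j', j = j' + 1 := ⟨j - 1, by omega⟩
        have hcs : cornerSum A i (j'+1) = cornerSum A i j' + 1 := by
          rw [cornerSum_succ_col, h1]
        have hnn : 0 ≤ cornerSum A i j' := cornerSum_nonneg A hA i j'
        have hsz : (cornerSum A i (j'+1)).toNat + 1 = ((cornerSum A i j').toNat + 1) + 1 := by
          omega
        rw [hsz]
        intro p hp
        have step := minorsOf_col (K := K) (n := n) (i := i) (j := j')
          (t := (cornerSum A i j').toNat + 1) hp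
        have hsub : Ideal.span (minorsOf K n i j' ((cornerSum A i j').toNat + 1)) ≤
            Ideal.span {p : MvPolynomial (Fin n × Fin n) K | ∃ i j : ℕ, InEss A i j ∧
              p ∈ minorsOf K n i j ((cornerSum A i j).toNat + 1)} :=
          Ideal.span_le.mpr (ih i j' hi (by omega) (by omega))
        exact hsub step

lemma ess_span (hA : IsASM A) :
    asmIdeal K A = Ideal.span {p : MvPolynomial (Fin n × Fin n) K | ∃ i j : ℕ,
      InEss A i j ∧ p ∈ minorsOf K n i j ((cornerSum A i j).toNat + 1)} := by
  apply le_antisymm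
  · rw [asmIdeal]
    apply Ideal.span_le.mpr
    rintro p ⟨i, j, hi1, hin, hj1, hjn, hp⟩
    exact phaseAll A hA (i + j) i j hin hjn le_rfl hp
  · apply Ideal.span_le.mpr
    rintro p ⟨i, j, hE, hp⟩
    obtain ⟨h1, h2, h3, h4⟩ := inDiagram_bounds A hE.1
    exact Ideal.subset_span ⟨i, j, h1, by omega, h3, by omega, hp⟩

end Phase
section BiGr

open Finset

lemma biGrFun_pos {i j r a : ℕ} (ha : 1 ≤ a) : 1 ≤ biGrFun i j r a := by
  unfold biGrFun; split_ifs <;> omega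

lemma biGrFun_le {n i j r : ℕ} (hrj : r ≤ j) (hijr : i + j ≤ n + r) {a : ℕ}
    (han : a ≤ n) : biGrFun i j r a ≤ n := by
  unfold biGrFun; split_ifs <;> omega

lemma biGrFun_inv {i j r : ℕ} (hri : r ≤ i) (hrj : r ≤ j) (a : ℕ) :
    biGrFun j i r (biGrFun i j r a) = a := by
  unfold biGrFun; split_ifs <;> omega

lemma entry1_biGr {n i j r : ℕ} (k l : ℕ) :
    entry1 (biGrMatrix n i j r) k l
      = if (1 ≤ k ∧ k ≤ n ∧ 1 ≤ l ∧ l ≤ n) ∧ biGrFun i j r k = l then 1 else 0 := by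
  unfold entry1 biGrMatrix
  by_cases h : 1 ≤ k ∧ k ≤ n ∧ 1 ≤ l ∧ l ≤ n
  · rw [dif_pos h]
    have hk : k - 1 + 1 = k := by omega
    have hl : l - 1 + 1 = l := by omega
    simp only [Matrix.of_apply, hk, hl, h, true_and]
  · rw [dif_neg h, if_neg (by tauto)]

lemma rowPartial_biGr {n i j r : ℕ} (k l : ℕ) :
    rowPartial (biGrMatrix n i j r) k l
      = if 1 ≤ k ∧ k ≤ n ∧ biGrFun i j r k ≤ l ∧ biGrFun i j r k ≤ n then 1 else 0 := by
  unfold rowPartial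
  simp only [entry1_biGr]
  have hcongr : ∀ l' ∈ Finset.Icc 1 l,
      (if (1 ≤ k ∧ k ≤ n ∧ 1 ≤ l' ∧ l' ≤ n) ∧ biGrFun i j r k = l' then (1:ℤ) else 0)
      = if l' = biGrFun i j r k then
          (if 1 ≤ k ∧ k ≤ n ∧ 1 ≤ l' ∧ l' ≤ n then 1 else 0) else 0 := by
    intro l' _
    split_ifs <;> omega
  rw [Finset.sum_congr rfl hcongr, Finset.sum_ite_eq' (Finset.Icc 1 l) (biGrFun i j r k)]
  simp only [Finset.mem_Icc]
  have hv1 : 1 ≤ k → 1 ≤ biGrFun i j r k := fun h => biGrFun_pos h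
  split_ifs <;> omega

lemma colPartial_biGr {n i j r : ℕ} (hri : r ≤ i) (hrj : r ≤ j) (k l : ℕ) :
    colPartial (biGrMatrix n i j r) k l
      = if 1 ≤ l ∧ l ≤ n ∧ biGrFun j i r l ≤ k ∧ biGrFun j i r l ≤ n then 1 else 0 := by
  unfold colPartial
  simp only [entry1_biGr]
  have hiff : ∀ k', biGrFun i j r k' = l ↔ k' = biGrFun j i r l := by
    intro k'
    constructor
    · rintro rfl; rw [biGrFun_inv hri hrj]
    · rintro rfl; rw [biGrFun_inv hrj hri]
  have hcongr : ∀ k' ∈ Finset.Icc 1 k,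
      (if (1 ≤ k' ∧ k' ≤ n ∧ 1 ≤ l ∧ l ≤ n) ∧ biGrFun i j r k' = l then (1:ℤ) else 0)
      = if k' = biGrFun j i r l then
          (if 1 ≤ biGrFun j i r l ∧ biGrFun j i r l ≤ n ∧ 1 ≤ l ∧ l ≤ n then 1 else 0)
        else 0 := by
    intro k' _
    have h := hiff k'
    split_ifs <;> omega
  rw [Finset.sum_congr rfl hcongr, Finset.sum_ite_eq' (Finset.Icc 1 k) (biGrFun j i r l)]
  simp only [Finset.mem_Icc]
  have hv1 : 1 ≤ l → 1 ≤ biGrFun j i r l := fun h => biGrFun_pos h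
  split_ifs <;> omega

lemma isASM_biGr {n i j r : ℕ} (hri : r ≤ i) (hrj : r ≤ j) (hin : i ≤ n) (hjn : j ≤ n)
    (hijr : i + j ≤ n + r) : IsASM (biGrMatrix n i j r) := by
  refine ⟨fun k l => ?_, fun k l => ?_, fun k h1 h2 => ?_, fun l h1 h2 => ?_⟩
  · rw [rowPartial_biGr]; split_ifs <;> simp
  · rw [colPartial_biGr hri hrj]; split_ifs <;> simp
  · rw [rowPartial_biGr, if_pos ⟨h1, h2, biGrFun_le hrj hijr h2, biGrFun_le hrj hijr h2⟩]
  · rw [colPartial_biGr hri hrj,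
      if_pos ⟨h1, h2, biGrFun_le hri (by omega) h2, biGrFun_le hri (by omega) h2⟩]

lemma inDiagram_biGr {n i j r : ℕ} (hri : r < i) (hrj : r < j) (hin : i ≤ n) (hjn : j ≤ n)
    (hijr : i + j ≤ n + r) (a b : ℕ) :
    InDiagram (biGrMatrix n i j r) a b ↔ (r < a ∧ a ≤ i ∧ r < b ∧ b ≤ j) := by
  have hASM := isASM_biGr (n := n) (le_of_lt hri) (le_of_lt hrj) hin hjn hijr
  constructor
  · intro h
    obtain ⟨h1, h2, h3, h4⟩ := inDiagram_bounds _ h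
    have hch := (inDiagram_char _ hASM h1 (le_of_lt h2) h3 (le_of_lt h4)).mp h
    rw [rowPartial_biGr, colPartial_biGr (le_of_lt hri) (le_of_lt hrj)] at hch
    obtain ⟨hr0, hc0⟩ := hch
    have hu : biGrFun i j r a ≤ n := biGrFun_le (le_of_lt hrj) hijr (by omega)
    have hw : biGrFun j i r b ≤ n := biGrFun_le (le_of_lt hri) (by omega) (by omega)
    have hb_lt : b < biGrFun i j r a := by
      by_contra hc
      rw [if_pos ⟨h1, by omega, by omega, hu⟩] at hr0
      exact one_ne_zero hr0
    have ha_lt : a < biGrFun j i r b := by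
      by_contra hc
      rw [if_pos ⟨h3, by omega, by omega, hw⟩] at hc0
      exact one_ne_zero hc0
    revert hb_lt ha_lt
    unfold biGrFun
    split_ifs <;> omega
  · rintro ⟨ha1, ha2, hb1, hb2⟩
    rw [inDiagram_char _ hASM (by omega) (by omega) (by omega) (by omega)]
    have hva : b < biGrFun i j r a := by unfold biGrFun; split_ifs <;> omega
    have hvb : a < biGrFun j i r b := by unfold biGrFun; split_ifs <;> omega
    rw [rowPartial_biGr, colPartial_biGr (le_of_lt hri) (le_of_lt hrj)]
    constructor
    · rw [if_neg]; rintro ⟨_, _, hle, _⟩; omega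
    · rw [if_neg]; rintro ⟨_, _, hle, _⟩; omega

lemma inEss_biGr {n i j r : ℕ} (hri : r < i) (hrj : r < j) (hin : i ≤ n) (hjn : j ≤ n)
    (hijr : i + j ≤ n + r) (a b : ℕ) :
    InEss (biGrMatrix n i j r) a b ↔ (a = i ∧ b = j) := by
  unfold InEss
  simp only [inDiagram_biGr hri hrj hin hjn hijr]
  omega

lemma cornerSum_biGr {n i j r : ℕ} (hri : r < i) (hrj : r < j) (hin : i ≤ n) (hjn : j ≤ n) :
    cornerSum (biGrMatrix n i j r) i j = (r : ℤ) := by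
  rw [cornerSum_rows]
  have hcongr : ∀ k ∈ Finset.Icc 1 i,
      rowPartial (biGrMatrix n i j r) k j = if k ≤ r then 1 else 0 := by
    intro k hk
    simp only [Finset.mem_Icc] at hk
    rw [rowPartial_biGr]
    by_cases hkr : k ≤ r
    · have hv : biGrFun i j r k = k := by unfold biGrFun; rw [if_pos hkr]
      rw [if_pos ⟨hk.1, by omega, by omega, by omega⟩, if_pos hkr]
    · have hv : biGrFun i j r k = k + (j - r) := by
        unfold biGrFun
        rw [if_neg hkr, if_pos hk.2]
      rw [if_neg (by rintro ⟨_, _, hle, _⟩; omega), if_neg hkr]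
  rw [Finset.sum_congr rfl hcongr, Finset.sum_boole]
  have hfil : (Finset.Icc 1 i).filter (fun k => k ≤ r) = Finset.Icc 1 r := by
    ext x; simp [Finset.mem_Icc, Finset.mem_filter]; omega
  rw [hfil, Nat.card_Icc]
  norm_num

end BiGr
section Final

open Finset

variable {K : Type*} [CommRing K] {n : ℕ} (A : Matrix (Fin n) (Fin n) ℤ)

lemma cornerSum_top_col (hA : IsASM A) {j : ℕ} (hjn : j ≤ n) :
    cornerSum A n j = (j : ℤ) := by
  rw [cornerSum_cols]
  have h : ∀ l ∈ Finset.Icc 1 j, colPartial A n l = (1:ℤ) := by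
    intro l hl
    simp only [Finset.mem_Icc] at hl
    exact hA.2.2.2 l hl.1 (by omega)
  rw [Finset.sum_congr rfl h]
  simp [Nat.card_Icc]

lemma ess_data (hA : IsASM A) {i j : ℕ} (hD : InDiagram A i j) :
    cornerSum A i j < (i : ℤ) ∧ cornerSum A i j < (j : ℤ) ∧
      (i : ℤ) + j ≤ n + cornerSum A i j := by
  obtain ⟨hi1, hi2, hj1, hj2⟩ := inDiagram_bounds A hD
  have hch := (inDiagram_char A hA hi1 (by omega) hj1 (by omega)).mp hD
  obtain ⟨i', rfl⟩ : ∃ i', i = i' + 1 := ⟨i - 1, by omega⟩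
  obtain ⟨j', rfl⟩ : ∃ j', j = j' + 1 := ⟨j - 1, by omega⟩
  have h1 : cornerSum A (i'+1) (j'+1) = cornerSum A i' (j'+1) := by
    rw [cornerSum_succ_row, hch.1, add_zero]
  have h2 : cornerSum A (i'+1) (j'+1) = cornerSum A (i'+1) j' := by
    rw [cornerSum_succ_col, hch.2, add_zero]
  have h3 : cornerSum A i' (j'+1) ≤ (i' : ℤ) := cornerSum_le_row A hA _ _
  have h4 : cornerSum A (i'+1) j' ≤ (j' : ℤ) := cornerSum_le_col A hA _ _
  refine ⟨by omega, by omega, ?_⟩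
  have h5 : cornerSum A n (j'+1) = ((j'+1 : ℕ) : ℤ) := cornerSum_top_col A hA (by omega)
  have h6 : cornerSum A n (j'+1)
      = cornerSum A (i'+1) (j'+1) + ∑ k ∈ Finset.Icc (i'+2) n, rowPartial A k (j'+1) := by
    rw [cornerSum_rows, cornerSum_rows, sum_split _ (show i'+1 ≤ n by omega)]
  have h7 : (∑ k ∈ Finset.Icc (i'+2) n, rowPartial A k (j'+1)) ≤ ((n - (i'+1) : ℕ) : ℤ) := by
    calc (∑ k ∈ Finset.Icc (i'+2) n, rowPartial A k (j'+1))
        ≤ ∑ k ∈ Finset.Icc (i'+2) n, (1 : ℤ) := by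
          apply Finset.sum_le_sum
          intro k _
          rcases hA.1 k (j'+1) with h | h <;> omega
      _ = ((n - (i'+1) : ℕ) : ℤ) := by simp [Nat.card_Icc]
  push_cast at h5 h7 ⊢
  omega

lemma bigr_ideal {i j r : ℕ} (hri : r < i) (hrj : r < j) (hin : i ≤ n) (hjn : j ≤ n)
    (hijr : i + j ≤ n + r) :
    asmIdeal K (biGrMatrix n i j r) = Ideal.span (minorsOf K n i j (r + 1)) := by
  rw [ess_span _ (isASM_biGr (le_of_lt hri) (le_of_lt hrj) hin hjn hijr)]
  congr 1
  ext p
  constructor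
  · rintro ⟨a, b, hE, hp⟩
    obtain ⟨rfl, rfl⟩ := (inEss_biGr hri hrj hin hjn hijr a b).mp hE
    rwa [cornerSum_biGr hri hrj hin hjn, Int.toNat_natCast] at hp
  · intro hp
    refine ⟨i, j, (inEss_biGr hri hrj hin hjn hijr i j).mpr ⟨rfl, rfl⟩, ?_⟩
    rw [cornerSum_biGr hri hrj hin hjn, Int.toNat_natCast]
    exact hp

end Final

/-- For a field `K` and `A ∈ ASM(n)`, the ASM ideal is generated
by its essential minors:
`I_A = ⟨ minors of size r_A(i,j)+1 of Z_{[i],[j]} : (i,j) ∈ Ess(A) ⟩`;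
equivalently `I_A = ∑_{u ∈ biGr(A)} I_u`, where
`biGr(A) = {[i, j, r_A(i,j)]_b : (i,j) ∈ Ess(A)}`. -/
theorem stmt19 {K : Type*} [Field K] {n : ℕ}
    (A : Matrix (Fin n) (Fin n) ℤ) (hA : IsASM A) :
    asmIdeal K A =
      Ideal.span {p | ∃ i j : ℕ, InEss A i j ∧
        p ∈ minorsOf K n i j ((cornerSum A i j).toNat + 1)} ∧
    asmIdeal K A =
      sSup {I : Ideal (MvPolynomial (Fin n × Fin n) K) | ∃ i j : ℕ,
        InEss A i j ∧
        I = asmIdeal K (biGrMatrix n i j (cornerSum A i j).toNat)} := by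
  have main1 := ess_span A hA (K := K)
  refine ⟨main1, ?_⟩
  have hdata : ∀ i j : ℕ, InEss A i j →
      (cornerSum A i j).toNat < i ∧ (cornerSum A i j).toNat < j ∧ i ≤ n ∧ j ≤ n ∧
        i + j ≤ n + (cornerSum A i j).toNat := by
    intro i j hE
    obtain ⟨h1, h2, h3, h4⟩ := inDiagram_bounds A hE.1
    obtain ⟨d1, d2, d3⟩ := ess_data A hA hE.1
    have hnn : 0 ≤ cornerSum A i j := cornerSum_nonneg A hA i j
    omega
  rw [main1]
  apply le_antisymm
  · apply Ideal.span_le.mpr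
    rintro p ⟨i, j, hE, hp⟩
    obtain ⟨hri, hrj, hin, hjn, hijr⟩ := hdata i j hE
    have hBB := bigr_ideal (K := K) (n := n) hri hrj hin hjn hijr
    have hmem : p ∈ asmIdeal K (biGrMatrix n i j (cornerSum A i j).toNat) := by
      rw [hBB]
      exact Ideal.subset_span hp
    have hIs : asmIdeal K (biGrMatrix n i j (cornerSum A i j).toNat) ∈
        {I : Ideal (MvPolynomial (Fin n × Fin n) K) | ∃ i j : ℕ, InEss A i j ∧
          I = asmIdeal K (biGrMatrix n i j (cornerSum A i j).toNat)} := ⟨i, j, hE, rfl⟩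
    exact le_sSup hIs hmem
  · apply sSup_le
    rintro I ⟨i, j, hE, rfl⟩
    obtain ⟨hri, hrj, hin, hjn, hijr⟩ := hdata i j hE
    rw [bigr_ideal (K := K) (n := n) hri hrj hin hjn hijr]
    apply Ideal.span_le.mpr
    intro p hp
    exact Ideal.subset_span ⟨i, j, hE, hp⟩
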